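/- For q not a root of unity, nonnegative integers ν₁, ν₂ and natural n with n ≤ min(ν₁, ν₂), one has ∑_{k=0}^n [n choose k]_q · q^{k(ν₁+ν₂-2n+2)} · [ν₁-k]_q! · [ν₂-n+k]_q! = q^{n(ν₂+1-n)} · [ν₁-n]_q! [ν₂-n]_q! [ν₁+ν₂-n+1]_q! / [ν₁+ν₂-2n+1]_q!. -/

import Mathlib

noncomputable section
open Finset

/-- `q` is a nonzero complex number that is not a root of unity. -/
def NotRootOfUnity (q : ℂ) : Prop := q ≠ 0 ∧ ∀ m : ℤ, m ≠ 0 → q ^ m ≠ 1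

/-- The q-integer `[m]_q = (q^m - q^(-m))/(q - q⁻¹)`. -/
def qint (q : ℂ) (m : ℤ) : ℂ := (q ^ m - q ^ (-m)) / (q - q⁻¹)

/-- The q-factorial `[n]_q! = ∏_{m=1}^n [m]_q`. -/
def qfact (q : ℂ) (n : ℕ) : ℂ := ∏ m ∈ Finset.range n, qint q ((m : ℤ) + 1)


/-- The q-binomial coefficient `[n choose k]_q = [n]_q! / ([k]_q! [n-k]_q!)`. -/
def qbinom (q : ℂ) (n k : ℕ) : ℂ := qfact q n / (qfact q k * qfact q (n - k))

section Aux
variable {q : ℂ}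

lemma den_ne (hq : NotRootOfUnity q) : q - q⁻¹ ≠ 0 := by
  intro h
  have h0 := hq.1
  have : q ^ (2:ℤ) = 1 := by
    have : q * q = 1 := by field_simp at h; linear_combination h
    rw [show (2:ℤ) = 1 + 1 by ring, zpow_add₀ h0]; simpa using this
  exact hq.2 2 (by norm_num) this

lemma qint_ne_zero (hq : NotRootOfUnity q) (m : ℤ) (hm : m ≠ 0) : qint q m ≠ 0 := by
  have h0 := hq.1
  have hnum : q ^ m - q ^ (-m) ≠ 0 := by
    intro h
    have heq : q ^ m = q ^ (-m) := sub_eq_zero.mp h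
    have : q ^ (2*m) = 1 := by
      have h2 : q ^ m * q ^ m = q ^ (-m) * q ^ m := by rw [heq]
      rw [← zpow_add₀ h0, ← zpow_add₀ h0] at h2
      rw [show 2*m = m + m by ring, h2]
      simp
    exact hq.2 (2*m) (by omega) this
  exact div_ne_zero hnum (den_ne hq)

lemma qfact_zero : qfact q 0 = 1 := by simp [qfact]

lemma qfact_succ (n : ℕ) : qfact q (n+1) = qfact q n * qint q ((n:ℤ)+1) := by
  simp [qfact, Finset.prod_range_succ]

lemma qfact_ne_zero (hq : NotRootOfUnity q) (n : ℕ) : qfact q n ≠ 0 := by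
  induction n with
  | zero => simp [qfact_zero]
  | succ n ih => rw [qfact_succ]; exact mul_ne_zero ih (qint_ne_zero hq _ (by omega))

lemma qint_addition (hq : NotRootOfUnity q) (m l : ℤ) :
    qint q (m + l) = q ^ l * qint q m + q ^ (-m) * qint q l := by
  have h0 := hq.1
  have key : q ^ (m+l) - q ^ (-(m+l))
      = q ^ l * (q ^ m - q ^ (-m)) + q ^ (-m) * (q ^ l - q ^ (-l)) := by
    rw [show q ^ (m+l) = q ^ m * q ^ l from zpow_add₀ h0 m l,
        show q ^ (-(m+l)) = q ^ (-m) * q ^ (-l) by rw [← zpow_add₀ h0]; congr 1; ring,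
        zpow_neg, zpow_neg]
    have hm : q ^ m ≠ 0 := zpow_ne_zero _ h0
    have hl : q ^ l ≠ 0 := zpow_ne_zero _ h0
    set x := q ^ m with hx; clear_value x
    set y := q ^ l with hy; clear_value y
    field_simp
    ring
  unfold qint
  rw [← mul_div_assoc, ← mul_div_assoc, ← add_div, key]

lemma qkey (hq : NotRootOfUnity q) (a b : ℤ) :
    qint q (a+1) + q ^ (a+b+2) * qint q (b+1) = q ^ (b+1) * qint q (a+b+2) := by
  have h0 := hq.1
  have key : (q ^ (a+1) - q ^ (-(a+1))) + q ^ (a+b+2) * (q ^ (b+1) - q ^ (-(b+1)))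
      = q ^ (b+1) * (q ^ (a+b+2) - q ^ (-(a+b+2))) := by
    rw [show q ^ (a+b+2) = q ^ (a+1) * q ^ (b+1) by rw [← zpow_add₀ h0]; congr 1; ring,
        show q ^ (-(a+b+2)) = q ^ (-(a+1)) * q ^ (-(b+1)) by rw [← zpow_add₀ h0]; congr 1; ring,
        zpow_neg, zpow_neg]
    have ha : q ^ (a+1) ≠ 0 := zpow_ne_zero _ h0
    have hb : q ^ (b+1) ≠ 0 := zpow_ne_zero _ h0
    set x := q ^ (a+1) with hx; clear_value x
    set y := q ^ (b+1) with hy; clear_value y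
    field_simp
    ring
  unfold qint
  rw [← mul_div_assoc, ← mul_div_assoc, ← add_div, key]

lemma qbinom_self (hq : NotRootOfUnity q) (n : ℕ) : qbinom q n n = 1 := by
  simp [qbinom, qfact_zero, div_self (qfact_ne_zero hq n)]

lemma qbinom_pascal (hq : NotRootOfUnity q) (k c : ℕ) :
    qbinom q (k+c+2) (k+1)
      = q ^ ((k:ℤ)+1) * qbinom q (k+c+1) (k+1) + q ^ (-((c:ℤ)+1)) * qbinom q (k+c+1) k := by
  have h0 := hq.1
  have expand : qint q ((k:ℤ)+(c:ℤ)+2)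
      = q ^ ((k:ℤ)+1) * qint q ((c:ℤ)+1) + q ^ (-((c:ℤ)+1)) * qint q ((k:ℤ)+1) := by
    have h := qint_addition hq ((c:ℤ)+1) ((k:ℤ)+1)
    rw [show (c:ℤ)+1+((k:ℤ)+1) = (k:ℤ)+(c:ℤ)+2 by ring] at h
    exact h
  unfold qbinom
  rw [show k+c+2-(k+1) = c+1 by omega, show k+c+1-(k+1) = c by omega,
      show k+c+1-k = c+1 by omega]
  rw [show k+c+2 = (k+c+1)+1 by omega, qfact_succ (k+c+1),
      show ((k+c+1:ℕ):ℤ)+1 = (k:ℤ)+(c:ℤ)+2 by push_cast; ring, expand]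
  rw [qfact_succ k, qfact_succ c]
  have hA := qfact_ne_zero hq k
  have hB := qfact_ne_zero hq c
  have hIK := qint_ne_zero hq ((k:ℤ)+1) (by omega)
  have hIC := qint_ne_zero hq ((c:ℤ)+1) (by omega)
  have hqk : q ^ ((k:ℤ)+1) ≠ 0 := zpow_ne_zero _ h0
  have hqc : q ^ (-((c:ℤ)+1)) ≠ 0 := zpow_ne_zero _ h0
  field_simp

/-- The q-binomial coefficient padded with zeros for `k > n`. -/
def qb (q : ℂ) (n k : ℕ) : ℂ := if k ≤ n then qbinom q n k else 0

lemma qb_zero (hq : NotRootOfUnity q) (n : ℕ) : qb q n 0 = 1 := by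
  rw [qb, if_pos (Nat.zero_le n)]
  simp [qbinom, qfact_zero, div_self (qfact_ne_zero hq n)]

lemma qb_overflow (n : ℕ) : qb q n (n+1) = 0 := by
  rw [qb, if_neg (by omega)]

lemma qb_pascal (hq : NotRootOfUnity q) (n k : ℕ) :
    qb q (n+1) (k+1) = q ^ ((k:ℤ)+1) * qb q n (k+1) + q ^ ((k:ℤ)-(n:ℤ)) * qb q n k := by
  rcases lt_trichotomy k n with h | h | h
  · obtain ⟨c, rfl⟩ : ∃ c, n = k + (c+1) := ⟨n-k-1, by omega⟩
    have e1 : qb q (k+(c+1)+1) (k+1) = qbinom q (k+c+2) (k+1) := by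
      rw [qb, if_pos (by omega), show k+(c+1)+1 = k+c+2 by omega]
    have e2 : qb q (k+(c+1)) (k+1) = qbinom q (k+c+1) (k+1) := by
      rw [qb, if_pos (by omega), show k+(c+1) = k+c+1 by omega]
    have e3 : qb q (k+(c+1)) k = qbinom q (k+c+1) k := by
      rw [qb, if_pos (by omega), show k+(c+1) = k+c+1 by omega]
    rw [e1, e2, e3, qbinom_pascal hq k c]
    congr 2
    push_cast; ring
  · subst h
    rw [qb, if_pos le_rfl, qb, if_neg (by omega), qb, if_pos le_rfl,
        qbinom_self hq, qbinom_self hq]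
    simp
  · rw [qb, if_neg (by omega), qb, if_neg (by omega), qb, if_neg (by omega)]
    simp

theorem aux_id (hq : NotRootOfUnity q) : ∀ n a b : ℕ,
    ∑ k ∈ Finset.range (n+1),
      qb q n k * q ^ ((k:ℤ) * ((a:ℤ)+(b:ℤ)+2)) * qfact q (n+a-k) * qfact q (b+k)
    = q ^ ((n:ℤ)*((b:ℤ)+1)) *
        (qfact q a * qfact q b * qfact q (a+b+n+1) / qfact q (a+b+1)) := by
  intro n
  induction n with
  | zero =>
    intro a b
    simp only [Finset.sum_range_one, Nat.cast_zero, zero_mul, zpow_zero, one_mul,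
      Nat.zero_add, Nat.add_zero, Nat.sub_zero]
    rw [qb_zero hq]
    rw [mul_div_assoc, div_self (qfact_ne_zero hq (a+b+1))]
    ring
  | succ n ih =>
    intro a b
    have h0 := hq.1
    have ih1 := ih (a+1) b
    have ih2 := ih a (b+1)
    push_cast at ih1 ih2 ⊢
    rw [Finset.sum_range_succ']
    -- the function appearing in ih1's sum
    set h : ℕ → ℂ := fun k =>
      qb q n k * q ^ ((k:ℤ) * ((a:ℤ)+1+(b:ℤ)+2)) * qfact q (n+(a+1)-k) * qfact q (b+k) with hh
    have hterm : ∀ k ∈ Finset.range (n+1),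
        qb q (n+1) (k+1) * q ^ (((k+1:ℕ):ℤ) * ((a:ℤ)+(b:ℤ)+2)) * qfact q (n+1+a-(k+1)) *
            qfact q (b+(k+1))
        = h (k+1) + q ^ ((a:ℤ)+(b:ℤ)+2-(n:ℤ)) *
            (qb q n k * q ^ ((k:ℤ) * ((a:ℤ)+((b:ℤ)+1)+2)) * qfact q (n+a-k) * qfact q (b+1+k)) := by
      intro k hk
      rw [hh]
      simp only []
      rw [qb_pascal hq n k, add_mul, add_mul, add_mul]
      congr 1
      · rw [show n+1+a-(k+1) = n+(a+1)-(k+1) by omega]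
        have e1 : q ^ ((k:ℤ)+1) * q ^ (((k+1:ℕ):ℤ) * ((a:ℤ)+(b:ℤ)+2))
            = q ^ (((k+1:ℕ):ℤ) * ((a:ℤ)+1+(b:ℤ)+2)) := by
          rw [← zpow_add₀ h0]; congr 1; push_cast; ring
        linear_combination (qfact q (n+(a+1)-(k+1)) * qfact q (b+(k+1)) * qb q n (k+1)) * e1
      · rw [show n+1+a-(k+1) = n+a-k by omega, show b+(k+1) = b+1+k by omega]
        have e2 : q ^ ((k:ℤ)-(n:ℤ)) * q ^ (((k+1:ℕ):ℤ) * ((a:ℤ)+(b:ℤ)+2))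
            = q ^ ((a:ℤ)+(b:ℤ)+2-(n:ℤ)) * q ^ ((k:ℤ) * ((a:ℤ)+((b:ℤ)+1)+2)) := by
          rw [← zpow_add₀ h0, ← zpow_add₀ h0]; congr 1; push_cast; ring
        linear_combination (qfact q (n+a-k) * qfact q (b+1+k) * qb q n k) * e2
    rw [Finset.sum_congr rfl hterm, Finset.sum_add_distrib, ← Finset.mul_sum]
    -- identify first sum + zero term with ih1's sum
    have hzero : qb q (n+1) 0 * q ^ (((0:ℕ):ℤ) * ((a:ℤ)+(b:ℤ)+2)) * qfact q (n+1+a-0) *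
        qfact q (b+0) = h 0 := by
      rw [hh]
      simp only [qb_zero hq, Nat.cast_zero, zero_mul, zpow_zero, mul_one, one_mul, Nat.sub_zero]
      rw [show n+(a+1) = n+1+a by omega]
    have hshift : (∑ k ∈ Finset.range (n+1), h (k+1)) + h 0 = ∑ k ∈ Finset.range (n+1), h k := by
      rw [← Finset.sum_range_succ' h (n+1), Finset.sum_range_succ]
      have : h (n+1) = 0 := by rw [hh]; simp only [qb_overflow]; ring
      rw [this, add_zero]
    rw [add_right_comm, hzero, hshift, ih1, ih2]
    rw [show a+1+b+n+1 = a+b+n+2 by omega, show a+(b+1)+n+1 = a+b+n+2 by omega,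
        show a+b+(n+1)+1 = a+b+n+2 by omega, show a+1+b+1 = a+b+2 by omega,
        show a+(b+1)+1 = a+b+2 by omega, qfact_succ a, qfact_succ b,
        show a+b+2 = (a+b+1)+1 by omega, qfact_succ (a+b+1),
        show ((a+b+1:ℕ):ℤ)+1 = (a:ℤ)+(b:ℤ)+2 by push_cast; ring]
    have e1 : q ^ (((n:ℤ)+1) * ((b:ℤ)+1)) = q ^ ((n:ℤ)*((b:ℤ)+1)) * q ^ ((b:ℤ)+1) := by
      rw [← zpow_add₀ h0]; congr 1; ring
    have e2 : q ^ ((a:ℤ)+(b:ℤ)+2-(n:ℤ)) * q ^ ((n:ℤ)*((b:ℤ)+1+1))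
        = q ^ ((n:ℤ)*((b:ℤ)+1)) * q ^ ((a:ℤ)+(b:ℤ)+2) := by
      rw [← zpow_add₀ h0, ← zpow_add₀ h0]; congr 1; ring
    rw [e1, ← mul_assoc (q ^ ((a:ℤ)+(b:ℤ)+2-(n:ℤ))), e2]
    have kq := qkey hq (a:ℤ) (b:ℤ)
    have hG := qfact_ne_zero hq (a+b+1)
    have hZ := qint_ne_zero hq ((a:ℤ)+(b:ℤ)+2) (by omega)
    field_simp
    linear_combination (qfact q a * qfact q b * qfact q (a+b+n+2)) * kq

end Aux

/-- The q-combinatorial identity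
`∑_{k=0}^n [n choose k]_q q^{k(ν₁+ν₂-2n+2)} [ν₁-k]_q! [ν₂-n+k]_q!
  = q^{n(ν₂+1-n)} [ν₁-n]_q! [ν₂-n]_q! [ν₁+ν₂-n+1]_q! / [ν₁+ν₂-2n+1]_q!`. -/
theorem q_identity_d (q : ℂ) (hq : NotRootOfUnity q) (ν₁ ν₂ n : ℕ)
    (h₁ : n ≤ ν₁) (h₂ : n ≤ ν₂) :
    ∑ k ∈ Finset.range (n + 1),
        qbinom q n k * q ^ ((k : ℤ) * ((ν₁ : ℤ) + (ν₂ : ℤ) - 2 * (n : ℤ) + 2)) *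
          qfact q (ν₁ - k) * qfact q (ν₂ - n + k)
      = q ^ ((n : ℤ) * ((ν₂ : ℤ) + 1 - (n : ℤ))) *
          (qfact q (ν₁ - n) * qfact q (ν₂ - n) * qfact q (ν₁ + ν₂ - n + 1) /
            qfact q (ν₁ + ν₂ - 2 * n + 1)) := by
  obtain ⟨a, rfl⟩ : ∃ a, ν₁ = n + a := ⟨ν₁ - n, by omega⟩
  obtain ⟨b, rfl⟩ : ∃ b, ν₂ = n + b := ⟨ν₂ - n, by omega⟩
  have A := aux_id hq n a b
  rw [show n+a+(n+b)-n+1 = a+b+n+1 by omega, show n+a+(n+b)-2*n+1 = a+b+1 by omega,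
      show n+a-n = a by omega, show n+b-n = b by omega,
      show ((n+b:ℕ):ℤ)+1-(n:ℤ) = (b:ℤ)+1 by push_cast; ring]
  rw [← A]
  apply Finset.sum_congr rfl
  intro k hk
  rw [Finset.mem_range] at hk
  rw [qb, if_pos (by omega),
      show ((n+a:ℕ):ℤ)+((n+b:ℕ):ℤ)-2*(n:ℤ)+2 = (a:ℤ)+(b:ℤ)+2 by push_cast; ring]
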